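/- Let ψ be a state on a C*-algebra A. If there exists a ∈ A with ψ(a) = ‖a‖ ≠ 0, then there exists a positive element b ∈ A with ‖b‖ = 1 such that ψ(b) = 1 and ψ(b c) = ψ(c) = ψ(c b) for all c ∈ A. -/

import Mathlib

open scoped ComplexOrder

section Aux

variable {A : Type*} [NonUnitalCStarAlgebra A] [PartialOrder A] [StarOrderedRing A]

lemma aux_re_le_norm (z : ℂ) : z.re ≤ ‖z‖ :=
  (Complex.re_le_norm z).trans_eq rfl

lemma aux_conj_eq (ψ : A →L[ℂ] ℂ) (hpos : ∀ a : A, 0 ≤ a → 0 ≤ ψ a) {z : A} (hz : 0 ≤ z) :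
    (starRingEnd ℂ) (ψ z) = ψ z :=
  Complex.conj_eq_iff_im.mpr ((Complex.nonneg_iff.mp (hpos z hz)).2.symm)

open Complex in
open scoped ComplexStarModule in
/-- A positive functional is hermitian. -/
lemma aux_herm (ψ : A →L[ℂ] ℂ) (hpos : ∀ a : A, 0 ≤ a → 0 ≤ ψ a) (x : A) :
    ψ (star x) = (starRingEnd ℂ) (ψ x) := by
  have hx := CStarAlgebra.linear_combination_nonneg x
  set p : A := ((ℜ x : A))⁺ with hpdef
  set q : A := ((ℜ x : A))⁻ with hqdef
  set u : A := ((ℑ x : A))⁺ with hudef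
  set v : A := ((ℑ x : A))⁻ with hvdef
  have hps : star p = p := (IsSelfAdjoint.of_nonneg (CFC.posPart_nonneg _)).star_eq
  have hqs : star q = q := (IsSelfAdjoint.of_nonneg (CFC.negPart_nonneg _)).star_eq
  have hus : star u = u := (IsSelfAdjoint.of_nonneg (CFC.posPart_nonneg _)).star_eq
  have hvs : star v = v := (IsSelfAdjoint.of_nonneg (CFC.negPart_nonneg _)).star_eq
  have h1 : (starRingEnd ℂ) (ψ p) = ψ p := aux_conj_eq ψ hpos (CFC.posPart_nonneg _)
  have h2 : (starRingEnd ℂ) (ψ q) = ψ q := aux_conj_eq ψ hpos (CFC.negPart_nonneg _)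
  have h3 : (starRingEnd ℂ) (ψ u) = ψ u := aux_conj_eq ψ hpos (CFC.posPart_nonneg _)
  have h4 : (starRingEnd ℂ) (ψ v) = ψ v := aux_conj_eq ψ hpos (CFC.negPart_nonneg _)
  have hsx : star x = (p - q) - (I • u - I • v) := by
    conv_lhs => rw [← hx]
    simp only [star_add, star_sub, star_smul, hps, hqs, hus, hvs, Complex.star_def,
      Complex.conj_I, neg_smul]
    abel
  rw [hsx]
  conv_rhs => rw [← hx]
  simp only [map_add, map_sub, map_smul, smul_eq_mul, map_mul, Complex.conj_I, h1, h2, h3, h4]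
  ring

/-- Cauchy–Schwarz for the sesquilinear form induced by a positive functional. -/
lemma aux_cs (ψ : A →L[ℂ] ℂ) (hpos : ∀ a : A, 0 ≤ a → 0 ≤ ψ a) (x y : A) :
    ‖ψ (star x * y)‖ ^ 2 ≤ (ψ (star x * x)).re * (ψ (star y * y)).re := by
  have herm := aux_herm ψ hpos
  set B : ℂ := ψ (star x * y) with hB
  obtain ⟨u, huB, hu1⟩ : ∃ u : ℂ, u * B = (‖B‖ : ℂ) ∧ ‖u‖ = 1 := by
    by_cases h : B = 0
    · exact ⟨1, by simp [h], by simp⟩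
    · refine ⟨(‖B‖ : ℂ) / B, by field_simp, ?_⟩
      rw [norm_div, Complex.norm_real, norm_norm, div_self (by simpa using h)]
  have huu : (starRingEnd ℂ) u * u = 1 := by
    rw [mul_comm, Complex.mul_conj, Complex.normSq_eq_norm_sq, hu1]
    norm_num
  have hyx : ψ (star y * x) = (starRingEnd ℂ) B := by
    rw [hB, ← herm, star_mul, star_star]
  have key : ∀ t : ℝ, 0 ≤ (ψ (star y * y)).re * (t * t) + (-2 * ‖B‖) * t
      + (ψ (star x * x)).re := by
    intro t
    set w : ℂ := (t : ℂ) * u with hw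
    have expand : star (x - w • y) * (x - w • y)
        = star x * x - w • (star x * y) - (starRingEnd ℂ w) • (star y * x)
          + (w * (starRingEnd ℂ w)) • (star y * y) := by
      simp only [star_sub, star_smul, sub_mul, mul_sub, smul_mul_assoc, mul_smul_comm,
        smul_smul, smul_sub, Complex.star_def]
      abel
    have hz := hpos _ (star_mul_self_nonneg (x - w • y))
    rw [expand] at hz
    have hwB : w * B = ((t * ‖B‖ : ℝ) : ℂ) := by
      rw [hw, mul_assoc, huB]; push_cast; ring
    have hcwB : (starRingEnd ℂ) w * (starRingEnd ℂ) B = ((t * ‖B‖ : ℝ) : ℂ) := by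
      rw [← map_mul, hwB]
      simp [Complex.conj_ofReal]
    have hww : w * (starRingEnd ℂ) w = ((t * t : ℝ) : ℂ) := by
      rw [hw, map_mul]
      push_cast
      calc (t : ℂ) * u * ((starRingEnd ℂ) (t : ℂ) * (starRingEnd ℂ) u)
          = (starRingEnd ℂ) (t : ℂ) * (t : ℂ) * ((starRingEnd ℂ) u * u) := by ring
        _ = (t : ℂ) * (t : ℂ) := by rw [huu, Complex.conj_ofReal]; ring
    have hval : ψ (star x * x - w • (star x * y) - (starRingEnd ℂ w) • (star y * x)
          + (w * (starRingEnd ℂ w)) • (star y * y))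
        = ψ (star x * x) - ((t * ‖B‖ : ℝ) : ℂ) - ((t * ‖B‖ : ℝ) : ℂ)
          + ((t * t : ℝ) : ℂ) * ψ (star y * y) := by
      simp only [map_add, map_sub, map_smul, smul_eq_mul, ← hB, hyx]
      rw [hwB, hcwB, hww]
    rw [hval] at hz
    have hre := (Complex.nonneg_iff.mp hz).1
    simp only [Complex.add_re, Complex.sub_re, Complex.ofReal_re, Complex.mul_re,
      Complex.ofReal_im, zero_mul, sub_zero] at hre
    nlinarith [hre]
  have hd := discrim_le_zero key
  rw [discrim] at hd
  nlinarith [hd, norm_nonneg B]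

lemma aux_smul_nonneg {c : ℝ} (hc : 0 ≤ c) {z : A} (hz : 0 ≤ z) : 0 ≤ c • z := by
  rw [← cfcₙ_const_mul_id c z (IsSelfAdjoint.of_nonneg hz)]
  exact cfcₙ_nonneg fun x hx => mul_nonneg hc (quasispectrum_nonneg_of_nonneg z hz x hx)

lemma aux_quasispectrum_norm_le {h : A} {x : ℝ} (hx : x ∈ quasispectrum ℝ h) : ‖x‖ ≤ ‖h‖ := by
  rw [Unitization.quasispectrum_eq_spectrum_inr' ℝ ℂ] at hx
  simpa [Unitization.norm_inr] using spectrum.norm_le_norm_of_mem hx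

end Aux

/-- Let `ψ` be a state on a C*-algebra `A` (a positive linear functional of norm one).
If there exists `a ∈ A` with `ψ(a) = ‖a‖ ≠ 0`, then there exists a positive element
`b ∈ A` with `‖b‖ = 1` such that `ψ(b) = 1` and `ψ(bc) = ψ(c) = ψ(cb)` for all `c ∈ A`. -/
theorem stmt13 {A : Type*} [NonUnitalCStarAlgebra A] [PartialOrder A] [StarOrderedRing A]
    (ψ : A →L[ℂ] ℂ)
    (hpos : ∀ a : A, 0 ≤ a → 0 ≤ ψ a)
    (hnorm : ‖ψ‖ = 1)
    (hcs : ∃ a : A, ψ a = (‖a‖ : ℂ) ∧ ‖a‖ ≠ 0) :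
    ∃ b : A, 0 ≤ b ∧ ‖b‖ = 1 ∧ ψ b = 1 ∧
      ∀ c : A, ψ (b * c) = ψ c ∧ ψ (c * b) = ψ c := by
  classical
  obtain ⟨a, ha, hna⟩ := hcs
  have herm := aux_herm ψ hpos
  have cs := aux_cs ψ hpos
  have hbound : ∀ z : A, ‖ψ z‖ ≤ ‖z‖ := fun z => by simpa [hnorm] using ψ.le_opNorm z
  set r : ℝ := ‖a‖ with hrdef
  have hr : 0 < r := lt_of_le_of_ne (norm_nonneg a) (Ne.symm hna)
  set h : A := a + star a with hh
  have hsa : IsSelfAdjoint h := IsSelfAdjoint.add_star_self a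
  have hψh : ψ h = ((2 * r : ℝ) : ℂ) := by
    rw [hh, map_add, herm, ha, Complex.conj_ofReal]
    push_cast; ring
  have hnormh : ‖h‖ ≤ 2 * r := by
    calc ‖h‖ ≤ ‖a‖ + ‖star a‖ := norm_add_le _ _
      _ = 2 * r := by rw [norm_star]; ring
  set p : A := h⁺ with hpdef
  have hp0 : 0 ≤ p := CFC.posPart_nonneg h
  have hn0 : 0 ≤ h⁻ := CFC.negPart_nonneg h
  have hψp_re : 2 * r ≤ (ψ p).re := by
    have hsub : p - h⁻ = h := CFC.posPart_sub_negPart h hsa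
    have heq : ψ p - ψ h⁻ = ((2 * r : ℝ) : ℂ) := by rw [← map_sub, hsub, hψh]
    have him := (Complex.nonneg_iff.mp (hpos _ hn0)).1
    have := congrArg Complex.re heq
    simp only [Complex.sub_re, Complex.ofReal_re] at this
    linarith
  have hpnorm_le : ‖p‖ ≤ 2 * r := by
    rw [hpdef, CFC.posPart_def]
    refine norm_cfcₙ_le fun x hx => ?_
    have hxh : ‖x‖ ≤ ‖h‖ := aux_quasispectrum_norm_le hx
    have hxp : ‖x⁺‖ ≤ ‖x‖ := by
      rw [Real.norm_eq_abs, Real.norm_eq_abs, _root_.posPart_def]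
      rcases le_total x 0 with hx0 | hx0
      · rw [max_eq_right hx0]; simp [abs_nonneg]
      · rw [max_eq_left hx0]
    linarith
  have hψp_norm : ‖ψ p‖ ≤ 2 * r := (hbound p).trans hpnorm_le
  have hψp_re' : (ψ p).re = 2 * r :=
    le_antisymm ((aux_re_le_norm _).trans hψp_norm) hψp_re
  have him : (ψ p).im = 0 := (Complex.nonneg_iff.mp (hpos _ hp0)).2.symm
  have hψp : ψ p = ((2 * r : ℝ) : ℂ) := Complex.ext (by simpa using hψp_re') (by simpa using him)
  have hpnorm : ‖p‖ = 2 * r := by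
    refine le_antisymm hpnorm_le ?_
    calc 2 * r = (ψ p).re := hψp_re'.symm
      _ ≤ ‖ψ p‖ := aux_re_le_norm _
      _ ≤ ‖p‖ := hbound p
  set c : ℝ := (2 * r)⁻¹ with hcdef
  have hc : 0 < c := by positivity
  set b : A := c • p with hbdef
  have hb0 : 0 ≤ b := aux_smul_nonneg hc.le hp0
  have hbsa : star b = b := (IsSelfAdjoint.of_nonneg hb0).star_eq
  have hbnorm : ‖b‖ = 1 := by
    rw [hbdef, norm_smul, Real.norm_eq_abs, abs_of_pos hc, hpnorm, hcdef]
    field_simp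
  have hψb : ψ b = 1 := by
    rw [hbdef, ψ.map_smul_of_tower, hψp, Complex.real_smul, hcdef]
    push_cast
    field_simp
  -- the approximate unit
  set l := CStarAlgebra.approximateUnit A with hldef
  have hl := CStarAlgebra.increasingApproximateUnit A
  haveI : l.NeBot := hl.toIsApproximateUnit.neBot
  have hre_xx : ∀ x : A, ‖x‖ ≤ 1 → (ψ (star x * x)).re ≤ 1 := by
    intro x hx
    calc (ψ (star x * x)).re ≤ ‖ψ (star x * x)‖ := aux_re_le_norm _
      _ ≤ ‖star x * x‖ := hbound _
      _ ≤ ‖star x‖ * ‖x‖ := norm_mul_le _ _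
      _ ≤ 1 * 1 := by rw [norm_star]; exact mul_le_mul hx hx (norm_nonneg x) zero_le_one
      _ = 1 := one_mul 1
  have tendsto_right : ∀ m : A, Filter.Tendsto (fun x => ψ (x * m)) l (nhds (ψ m)) :=
    fun m => (ψ.continuous.tendsto m).comp (hl.toIsApproximateUnit.tendsto_mul_right m)
  have tendsto_left : ∀ m : A, Filter.Tendsto (fun x => ψ (m * x)) l (nhds (ψ m)) :=
    fun m => (ψ.continuous.tendsto m).comp (hl.toIsApproximateUnit.tendsto_mul_left m)
  -- ψ (b * b) = 1
  have hbb_re_nonneg : 0 ≤ (ψ (b * b)).re := by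
    have := hpos _ (star_mul_self_nonneg b)
    rw [hbsa] at this
    exact (Complex.nonneg_iff.mp this).1
  have hbb_le : (ψ (b * b)).re ≤ 1 := by
    have := hre_xx b (le_of_eq hbnorm)
    rwa [hbsa] at this
  have hbb_ge : 1 ≤ (ψ (b * b)).re := by
    have t1 : Filter.Tendsto (fun x => ψ (x * b)) l (nhds 1) := by
      simpa [hψb] using tendsto_right b
    have t2 : Filter.Tendsto (fun x => ‖ψ (x * b)‖ ^ 2) l (nhds 1) := by
      simpa using t1.norm.pow 2
    refine le_of_tendsto t2 ?_
    filter_upwards [hl.eventually_star_eq, hl.eventually_norm] with x hxs hxn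
    calc ‖ψ (x * b)‖ ^ 2 = ‖ψ (star x * b)‖ ^ 2 := by rw [hxs]
      _ ≤ (ψ (star x * x)).re * (ψ (star b * b)).re := cs x b
      _ ≤ 1 * (ψ (b * b)).re := by
          rw [hbsa]
          exact mul_le_mul_of_nonneg_right (hre_xx x hxn) hbb_re_nonneg
      _ = (ψ (b * b)).re := one_mul _
  have hbb : ψ (b * b) = 1 := by
    have him' : (ψ (b * b)).im = 0 := by
      have := hpos _ (star_mul_self_nonneg b)
      rw [hbsa] at this
      exact (Complex.nonneg_iff.mp this).2.symm
    have : (ψ (b * b)).re = 1 := le_antisymm hbb_le hbb_ge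
    exact Complex.ext (by simpa using this) (by simpa using him')
  -- the key left identity
  have key : ∀ d : A, ψ (b * d) = ψ d := by
    intro d
    have hdd : 0 ≤ (ψ (star d * d)).re := (Complex.nonneg_iff.mp (hpos _ (star_mul_self_nonneg d))).1
    have t3 : Filter.Tendsto (fun x : A => ‖ψ (x * d) - ψ (b * d)‖ ^ 2) l
        (nhds (‖ψ d - ψ (b * d)‖ ^ 2)) :=
      (((tendsto_right d).sub tendsto_const_nhds).norm.pow 2)
    have tb1 : Filter.Tendsto (fun x : A => (ψ (x * b)).re) l (nhds 1) := by
      have := (Complex.continuous_re.tendsto (ψ b)).comp (tendsto_right b)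
      simpa [hψb, Function.comp_def] using this
    have tb2 : Filter.Tendsto (fun x : A => (ψ (b * x)).re) l (nhds 1) := by
      have := (Complex.continuous_re.tendsto (ψ b)).comp (tendsto_left b)
      simpa [hψb, Function.comp_def] using this
    have t4 : Filter.Tendsto
        (fun x : A => (2 - (ψ (x * b)).re - (ψ (b * x)).re) * (ψ (star d * d)).re) l (nhds 0) := by
      have : Filter.Tendsto (fun x : A => (2 - (ψ (x * b)).re - (ψ (b * x)).re)) l (nhds 0) := by
        have h20 := (tendsto_const_nhds (x := (2:ℝ)) (f := l)).sub tb1 |>.sub tb2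
        norm_num at h20
        exact h20
      simpa using this.mul_const _
    have hev : ∀ᶠ x in l, ‖ψ (x * d) - ψ (b * d)‖ ^ 2
        ≤ (2 - (ψ (x * b)).re - (ψ (b * x)).re) * (ψ (star d * d)).re := by
      filter_upwards [hl.eventually_star_eq, hl.eventually_norm] with x hxs hxn
      have hsub : ψ (x * d) - ψ (b * d) = ψ ((x - b) * d) := by
        rw [sub_mul, map_sub]
      have hsxb : star (x - b) = x - b := by rw [star_sub, hxs, hbsa]
      have hcs' := cs (x - b) d
      rw [hsxb] at hcs'
      have hexp : (x - b) * (x - b) = x * x - x * b - b * x + b * b := by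
        simp only [sub_mul, mul_sub]
        abel
      have hre_exp : (ψ ((x - b) * (x - b))).re
          = (ψ (x * x)).re - (ψ (x * b)).re - (ψ (b * x)).re + (ψ (b * b)).re := by
        rw [hexp]
        simp [map_add, map_sub, Complex.add_re, Complex.sub_re]
      have hxx1 : (ψ (x * x)).re ≤ 1 := by
        have := hre_xx x hxn
        rwa [hxs] at this
      have hbb1 : (ψ (b * b)).re = 1 := by rw [hbb]; simp
      have hmid : (ψ ((x - b) * (x - b))).re ≤ 2 - (ψ (x * b)).re - (ψ (b * x)).re := by
        rw [hre_exp, hbb1]; linarith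
      calc ‖ψ (x * d) - ψ (b * d)‖ ^ 2 = ‖ψ ((x - b) * d)‖ ^ 2 := by rw [hsub]
        _ ≤ (ψ ((x - b) * (x - b))).re * (ψ (star d * d)).re := hcs'
        _ ≤ (2 - (ψ (x * b)).re - (ψ (b * x)).re) * (ψ (star d * d)).re :=
            mul_le_mul_of_nonneg_right hmid hdd
    have hL : ‖ψ d - ψ (b * d)‖ ^ 2 ≤ 0 := le_of_tendsto_of_tendsto t3 t4 hev
    have : ‖ψ d - ψ (b * d)‖ = 0 := by nlinarith [norm_nonneg (ψ d - ψ (b * d))]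
    exact (sub_eq_zero.mp (norm_eq_zero.mp this)).symm
  refine ⟨b, hb0, hbnorm, hψb, fun d => ⟨key d, ?_⟩⟩
  have h1 : ψ (b * star d) = ψ (star d) := key (star d)
  have h2 : ψ (star (d * b)) = (starRingEnd ℂ) (ψ (d * b)) := herm _
  have h3 : star (d * b) = b * star d := by rw [star_mul, hbsa]
  have h4 : ψ (star d) = (starRingEnd ℂ) (ψ d) := herm d
  have : (starRingEnd ℂ) (ψ (d * b)) = (starRingEnd ℂ) (ψ d) := by
    rw [← h2, h3, h1, h4]
  exact (starRingEnd ℂ).injective this
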